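/- arXiv:1108.2977 — 2 statements merged into one kernel-verified Lean document; each statement's English description precedes it below -/
import Mathlib

section
/- Let m ≥ 1 be an integer. For every ℓ ∈ ℝ and every θ = (θ₁,…,θ_m) ∈ ℝ^m, the following identity of complex numbers holds: A_δ(θ) · ∏_{j=1}^m (2cosh ℓ − 2cos θ_j) = Σ_{q=0}^{m−1} (−1)^q (e^{(m−q)ℓ} + e^{(q−m)ℓ}) · A_{δ+ω_q}(θ) + (−1)^m · ( A_{δ+λ⁺}(θ) + A_{δ+λ⁻}(θ) ), where λ⁺ = (1,1,…,1) and λ⁻ = (1,…,1,−1). (This is the Weyl-character-formula form of the expansion of |det(e^{−ℓ/2}I_{2m} − e^{ℓ/2}u)| into irreducible characters of SO(2m), after multiplying both sides by the Weyl denominator A_δ.) -/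
open scoped BigOperators

/-- The alternating sum `A_λ(θ) = Σ_{w ∈ W_m} sgn(w) exp(i Σ_j (w·λ)_j θ_j)`, where
`W_m` consists of pairs `(σ, ε)` with `σ` a permutation of `{1,…,m}` and
`ε ∈ {±1}^m` with `∏ ε_j = 1`, and `(w·λ)_j = ε_j λ_{σ⁻¹(j)}`. -/
noncomputable def Avec (m : ℕ) (lam : Fin m → ℤ) (θ : Fin m → ℝ) : ℂ :=
  ∑ σ : Equiv.Perm (Fin m),
    ∑ ε ∈ Finset.univ.filter (fun ε : Fin m → ℤˣ => (∏ j, (ε j : ℤ)) = 1),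
      ((Equiv.Perm.sign σ : ℤ) : ℂ) *
        Complex.exp (Complex.I *
          ∑ j : Fin m, (((ε j : ℤ) * lam (σ⁻¹ j) : ℤ) : ℂ) * ((θ j : ℝ) : ℂ))

/-- `δ = (m-1, m-2, …, 1, 0)`. -/
def deltaVec (m : ℕ) : Fin m → ℤ := fun j => (m : ℤ) - 1 - (j : ℤ)

/-- `ω_q`: first `q` entries equal to `1`, the rest `0`. -/
def omegaVec (m q : ℕ) : Fin m → ℤ := fun j => if (j : ℕ) < q then 1 else 0



noncomputable def chebP : ℕ → Polynomial ℂ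
  | 0 => 2
  | 1 => Polynomial.X
  | (n+2) => Polynomial.X * chebP (n+1) - chebP n

lemma chebP_eval (n : ℕ) (φ : ℂ) :
    (chebP n).eval (2 * Complex.cos φ) = 2 * Complex.cos (n * φ) := by
  induction n using Nat.twoStepInduction with
  | zero => simp [chebP]
  | one => simp [chebP]
  | more n ih1 ih2 =>
    have key : 2 * Complex.cos ((n+2 : ℕ) * φ) + 2 * Complex.cos (n * φ)
        = (2 * Complex.cos φ) * (2 * Complex.cos ((n+1 : ℕ) * φ)) := by
      have h1 : ((n+2 : ℕ) : ℂ) * φ = ((n+1 : ℕ) : ℂ) * φ + φ := by push_cast; ring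
      have h2 : ((n : ℕ) : ℂ) * φ = ((n+1 : ℕ) : ℂ) * φ - φ := by push_cast; ring
      rw [h1, h2, Complex.cos_add, Complex.cos_sub]; ring
    simp only [chebP, Polynomial.eval_sub, Polynomial.eval_mul, Polynomial.eval_X, ih1, ih2]
    linear_combination (-1 : ℂ) * key

lemma chebP_degree_le (n : ℕ) : (chebP n).degree ≤ n := by
  induction n using Nat.twoStepInduction with
  | zero => simpa [chebP] using Polynomial.degree_le_of_natDegree_le (p := (2 : Polynomial ℂ)) (n := 0) (by simp)
  | one => simpa [chebP] using Polynomial.degree_X_le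
  | more n ih1 ih2 =>
    rw [chebP]
    refine (Polynomial.degree_sub_le _ _).trans ?_
    simp only [sup_le_iff]
    constructor
    · refine (Polynomial.degree_mul_le _ _).trans ?_
      calc Polynomial.X.degree + (chebP (n+1)).degree ≤ 1 + ((n+1 : ℕ) : WithBot ℕ) :=
            add_le_add Polynomial.degree_X_le ih2
        _ ≤ ((n+2 : ℕ) : WithBot ℕ) := by
            rw [show ((n+2:ℕ) : WithBot ℕ) = 1 + ((n+1:ℕ) : WithBot ℕ) by push_cast; ring]
    · exact ih1.trans (by exact_mod_cast (by omega : n ≤ n + 2))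

private lemma cheb_step {p q : Polynomial ℂ} {k : ℕ} (hp : p.Monic) (hd : p.degree = ((k+1 : ℕ) : WithBot ℕ))
    (hq : q.degree ≤ ((k : ℕ) : WithBot ℕ)) :
    (Polynomial.X * p - q).Monic ∧ (Polynomial.X * p - q).degree = ((k+2 : ℕ) : WithBot ℕ) := by
  have hxp : (Polynomial.X * p).Monic := Polynomial.monic_X.mul hp
  have hdxp : (Polynomial.X * p).degree = ((k+2 : ℕ) : WithBot ℕ) := by
    rw [Polynomial.degree_mul, Polynomial.degree_X, hd]
    push_cast; ring
  have hlt : q.degree < (Polynomial.X * p).degree := by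
    rw [hdxp]
    exact hq.trans_lt (by exact_mod_cast (by omega : k < k + 2))
  exact ⟨hxp.sub_of_left hlt, by rw [Polynomial.degree_sub_eq_left_of_degree_lt hlt, hdxp]⟩

lemma chebP_monic_deg (n : ℕ) : (chebP (n+1)).Monic ∧ (chebP (n+1)).degree = ((n+1 : ℕ) : WithBot ℕ) := by
  induction n using Nat.twoStepInduction with
  | zero => exact ⟨Polynomial.monic_X, Polynomial.degree_X⟩
  | one =>
    rw [show chebP 2 = Polynomial.X * chebP 1 - chebP 0 from rfl]
    exact cheb_step (k := 0) Polynomial.monic_X Polynomial.degree_X (chebP_degree_le 0)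
  | more n ih1 ih2 =>
    rw [show chebP (n+3) = Polynomial.X * chebP (n+2) - chebP (n+1) from rfl]
    exact cheb_step (k := n+1) ih2.1 ih2.2 (chebP_degree_le (n+1))

lemma prod_Ioi_rev {M : Type*} [CommMonoid M] (n : ℕ) (F : Fin n → Fin n → M) :
    (∏ i : Fin n, ∏ j ∈ Finset.Ioi i, F (Fin.rev j) (Fin.rev i)) =
      ∏ i : Fin n, ∏ j ∈ Finset.Ioi i, F i j := by
  rw [Finset.prod_sigma', Finset.prod_sigma']
  refine Finset.prod_nbij' (fun p => ⟨Fin.rev p.2, Fin.rev p.1⟩)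
    (fun p => ⟨Fin.rev p.2, Fin.rev p.1⟩) ?_ ?_ ?_ ?_ ?_
  · rintro ⟨i, j⟩ h
    simp only [Finset.mem_sigma, Finset.mem_univ, Finset.mem_Ioi, true_and] at h ⊢
    exact Fin.rev_lt_rev.mpr h
  · rintro ⟨i, j⟩ h
    simp only [Finset.mem_sigma, Finset.mem_univ, Finset.mem_Ioi, true_and] at h ⊢
    exact Fin.rev_lt_rev.mpr h
  · rintro ⟨i, j⟩ _; simp
  · rintro ⟨i, j⟩ _; simp
  · rintro ⟨i, j⟩ _; rfl

noncomputable def pcolD (n : ℕ) : Fin n → Polynomial ℂ :=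
  fun q => if (q : ℕ) = 0 then 1 else chebP q

lemma pcolD_natDegree (n : ℕ) (i : Fin n) : ((pcolD n) i).natDegree = i := by
  rcases Nat.eq_zero_or_pos (i : ℕ) with h | h
  · rw [pcolD, if_pos h, Polynomial.natDegree_one, h]
  · obtain ⟨k, hk⟩ := Nat.exists_eq_succ_of_ne_zero (Nat.pos_iff_ne_zero.mp h)
    rw [pcolD, if_neg (by omega), hk]
    exact Polynomial.natDegree_eq_of_degree_eq_some (chebP_monic_deg k).2

lemma pcolD_monic (n : ℕ) (i : Fin n) : ((pcolD n) i).Monic := by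
  rcases Nat.eq_zero_or_pos (i : ℕ) with h | h
  · rw [pcolD, if_pos h]; exact Polynomial.monic_one
  · obtain ⟨k, hk⟩ := Nat.exists_eq_succ_of_ne_zero (Nat.pos_iff_ne_zero.mp h)
    rw [pcolD, if_neg (by omega), hk]
    exact (chebP_monic_deg k).1

lemma det_cos_matrix (n : ℕ) (hn : 1 ≤ n) (φ : Fin n → ℂ) :
    (Matrix.of fun i q : Fin n => 2 * Complex.cos (((n - 1 - (q : ℕ) : ℕ) : ℂ) * φ i)).det =
      2 * ∏ i : Fin n, ∏ j ∈ Finset.Ioi i, (2 * Complex.cos (φ i) - 2 * Complex.cos (φ j)) := by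
  have hb : (Matrix.of fun i q : Fin n => 2 * Complex.cos (((n - 1 - (q : ℕ) : ℕ) : ℂ) * φ i)) =
      ((Matrix.of fun i q : Fin n => ((pcolD n) q).eval (2 * Complex.cos (φ (Fin.rev i)))) *
        Matrix.diagonal (fun q : Fin n => if (q : ℕ) = 0 then (2:ℂ) else 1)).submatrix
          Fin.rev Fin.rev := by
    ext i q
    rw [Matrix.submatrix_apply, Matrix.mul_diagonal, Matrix.of_apply, Matrix.of_apply]
    have hval : ((Fin.rev q : Fin n) : ℕ) = n - 1 - (q : ℕ) := by
      rw [Fin.val_rev]; omega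
    by_cases h0 : ((Fin.rev q : Fin n) : ℕ) = 0
    · rw [pcolD, if_pos h0, if_pos h0, Polynomial.eval_one, one_mul, ← hval, h0]
      norm_num
    · rw [pcolD, if_neg h0, if_neg h0, mul_one, chebP_eval, Fin.rev_rev, hval]
  rw [hb]
  rw [show ((Matrix.of fun i q : Fin n => ((pcolD n) q).eval (2 * Complex.cos (φ (Fin.rev i)))) *
        Matrix.diagonal (fun q : Fin n => if (q : ℕ) = 0 then (2:ℂ) else 1)).submatrix
          Fin.rev Fin.rev = Matrix.submatrix _ (⇑(Fin.revPerm (n := n))) (⇑(Fin.revPerm (n := n))) from rfl]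
  rw [Matrix.det_submatrix_equiv_self, Matrix.det_mul, Matrix.det_diagonal]
  have hdiag : (∏ q : Fin n, if (q : ℕ) = 0 then (2:ℂ) else 1) = 2 := by
    rw [Finset.prod_eq_single (⟨0, hn⟩ : Fin n)]
    · rfl
    · intro b _ hb2
      exact if_neg (fun hb0 => hb2 (Fin.ext hb0))
    · intro h; exact absurd (Finset.mem_univ _) h
  rw [hdiag, ← Matrix.det_eval_matrixOfPolynomials_eq_det_vandermonde
        (fun i => 2 * Complex.cos (φ (Fin.rev i))) (pcolD n) (pcolD_natDegree n) (pcolD_monic n),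
      Matrix.det_vandermonde]
  rw [mul_comm]
  congr 1
  exact prod_Ioi_rev n (fun a b => 2 * Complex.cos (φ a) - 2 * Complex.cos (φ b))

noncomputable def cosMat (m : ℕ) (lam : Fin m → ℤ) (θ : Fin m → ℝ) : Matrix (Fin m) (Fin m) ℂ :=
  Matrix.of fun j k => 2 * Complex.cos ((lam k : ℂ) * ((θ j : ℝ) : ℂ))

noncomputable def sinMat (m : ℕ) (lam : Fin m → ℤ) (θ : Fin m → ℝ) : Matrix (Fin m) (Fin m) ℂ :=
  Matrix.of fun j k => 2 * Complex.I * Complex.sin ((lam k : ℂ) * ((θ j : ℝ) : ℂ))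

lemma sum_units_fn (f : ℤˣ → ℂ) : (∑ u : ℤˣ, f u) = f 1 + f (-1) := by
  have huniv : (Finset.univ : Finset ℤˣ) = {1, -1} := by
    ext u
    simp only [Finset.mem_univ, Finset.mem_insert, Finset.mem_singleton, true_iff]
    exact Int.units_eq_one_or u
  rw [huniv, Finset.sum_insert (by decide), Finset.sum_singleton]

lemma exp_add_exp_neg (z : ℂ) :
    Complex.exp (Complex.I * z) + Complex.exp (Complex.I * -z) = 2 * Complex.cos z := by
  rw [mul_comm Complex.I z, mul_comm Complex.I (-z), Complex.exp_mul_I, Complex.exp_mul_I,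
    Complex.cos_neg, Complex.sin_neg]
  ring

lemma exp_sub_exp_neg (z : ℂ) :
    Complex.exp (Complex.I * z) - Complex.exp (Complex.I * -z) = 2 * Complex.I * Complex.sin z := by
  rw [mul_comm Complex.I z, mul_comm Complex.I (-z), Complex.exp_mul_I, Complex.exp_mul_I,
    Complex.cos_neg, Complex.sin_neg]
  ring

lemma sum_eps (m : ℕ) (a : Fin m → ℤ) (θ : Fin m → ℝ) :
    (∑ ε ∈ Finset.univ.filter (fun ε : Fin m → ℤˣ => (∏ j, (ε j : ℤ)) = 1),
      Complex.exp (Complex.I *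
        ∑ j : Fin m, (((ε j : ℤ) * a j : ℤ) : ℂ) * ((θ j : ℝ) : ℂ))) =
    ((∏ j, (2 * Complex.cos ((a j : ℂ) * ((θ j : ℝ) : ℂ)))) +
     (∏ j, (2 * Complex.I * Complex.sin ((a j : ℂ) * ((θ j : ℝ) : ℂ))))) / 2 := by
  set E : Fin m → ℤˣ → ℂ := fun j u =>
    Complex.exp (Complex.I * ((((u : ℤ) * a j : ℤ) : ℂ) * ((θ j : ℝ) : ℂ))) with hE
  have hg : ∀ ε : Fin m → ℤˣ,
      Complex.exp (Complex.I *
        ∑ j : Fin m, (((ε j : ℤ) * a j : ℤ) : ℂ) * ((θ j : ℝ) : ℂ)) = ∏ j, E j (ε j) := by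
    intro ε
    rw [Finset.mul_sum, Complex.exp_sum]
  have key : ∀ ε : Fin m → ℤˣ,
      (if (∏ j, (ε j : ℤ)) = 1 then (∏ j, E j (ε j)) else 0) =
        ((∏ j, E j (ε j)) + ∏ j, (((ε j : ℤ) : ℂ) * E j (ε j))) / 2 := by
    intro ε
    have hsplit : (∏ j, (((ε j : ℤ) : ℂ) * E j (ε j))) =
        ((∏ j, (ε j : ℤ) : ℤ) : ℂ) * ∏ j, E j (ε j) := by
      rw [Finset.prod_mul_distrib]
      push_cast
      ring
    have hcoe : (∏ j, (ε j : ℤ)) = (((∏ j, ε j : ℤˣ)) : ℤ) :=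
      (map_prod (Units.coeHom ℤ) ε Finset.univ).symm
    rcases Int.units_eq_one_or (∏ j, ε j) with h | h
    · have h' : (∏ j, (ε j : ℤ)) = 1 := by rw [hcoe, h]; rfl
      rw [if_pos h', hsplit, h']
      push_cast
      ring
    · have h' : (∏ j, (ε j : ℤ)) = -1 := by rw [hcoe, h]; rfl
      rw [if_neg (by rw [h']; decide), hsplit, h']
      push_cast
      ring
  calc (∑ ε ∈ Finset.univ.filter (fun ε : Fin m → ℤˣ => (∏ j, (ε j : ℤ)) = 1),
      Complex.exp (Complex.I *
        ∑ j : Fin m, (((ε j : ℤ) * a j : ℤ) : ℂ) * ((θ j : ℝ) : ℂ)))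
      = ∑ ε ∈ Finset.univ.filter (fun ε : Fin m → ℤˣ => (∏ j, (ε j : ℤ)) = 1),
          ∏ j, E j (ε j) := Finset.sum_congr rfl (fun ε _ => hg ε)
    _ = ∑ ε : Fin m → ℤˣ, (if (∏ j, (ε j : ℤ)) = 1 then (∏ j, E j (ε j)) else 0) :=
        (Finset.sum_filter _ _)
    _ = ∑ ε : Fin m → ℤˣ, ((∏ j, E j (ε j)) + ∏ j, (((ε j : ℤ) : ℂ) * E j (ε j))) / 2 :=
        Finset.sum_congr rfl (fun ε _ => key ε)
    _ = ((∑ ε : Fin m → ℤˣ, ∏ j, E j (ε j)) +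
          ∑ ε : Fin m → ℤˣ, ∏ j, (((ε j : ℤ) : ℂ) * E j (ε j))) / 2 := by
        rw [← Finset.sum_add_distrib, Finset.sum_div]
    _ = ((∏ j, ∑ u : ℤˣ, E j u) +
          ∏ j, ∑ u : ℤˣ, (((u : ℤ) : ℂ) * E j u)) / 2 := by
        rw [Fintype.prod_sum, Fintype.prod_sum]
    _ = ((∏ j, (2 * Complex.cos ((a j : ℂ) * ((θ j : ℝ) : ℂ)))) +
         (∏ j, (2 * Complex.I * Complex.sin ((a j : ℂ) * ((θ j : ℝ) : ℂ))))) / 2 := by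
        congr 1
        congr 1
        · refine Finset.prod_congr rfl (fun j _ => ?_)
          rw [sum_units_fn (fun u => E j u)]
          have := exp_add_exp_neg ((a j : ℂ) * ((θ j : ℝ) : ℂ))
          rw [← this, hE]
          push_cast
          ring_nf
        · refine Finset.prod_congr rfl (fun j _ => ?_)
          rw [sum_units_fn (fun u => (((u : ℤ) : ℂ) * E j u))]
          have := exp_sub_exp_neg ((a j : ℂ) * ((θ j : ℝ) : ℂ))
          rw [← this, hE]
          push_cast
          ring_nf

lemma avec_eq (m : ℕ) (lam : Fin m → ℤ) (θ : Fin m → ℝ) :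
    Avec m lam θ = ((cosMat m lam θ).det + (sinMat m lam θ).det) / 2 := by
  rw [Avec]
  have hσ : ∀ σ : Equiv.Perm (Fin m),
      (∑ ε ∈ Finset.univ.filter (fun ε : Fin m → ℤˣ => (∏ j, (ε j : ℤ)) = 1),
        ((Equiv.Perm.sign σ : ℤ) : ℂ) *
          Complex.exp (Complex.I *
            ∑ j : Fin m, (((ε j : ℤ) * lam (σ⁻¹ j) : ℤ) : ℂ) * ((θ j : ℝ) : ℂ))) =
      ((Equiv.Perm.sign σ : ℤ) : ℂ) *
        (((∏ i, cosMat m lam θ (σ i) i) + ∏ i, sinMat m lam θ (σ i) i) / 2) := by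
    intro σ
    rw [← Finset.mul_sum, sum_eps m (fun j => lam (σ⁻¹ j)) θ]
    have hc : (∏ j, (2 * Complex.cos ((lam (σ⁻¹ j) : ℂ) * ((θ j : ℝ) : ℂ)))) =
        ∏ i, cosMat m lam θ (σ i) i := by
      rw [← Equiv.prod_comp σ⁻¹ (fun i => cosMat m lam θ (σ i) i)]
      refine Finset.prod_congr rfl (fun j _ => ?_)
      simp [cosMat]
    have hs : (∏ j, (2 * Complex.I * Complex.sin ((lam (σ⁻¹ j) : ℂ) * ((θ j : ℝ) : ℂ)))) =
        ∏ i, sinMat m lam θ (σ i) i := by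
      rw [← Equiv.prod_comp σ⁻¹ (fun i => sinMat m lam θ (σ i) i)]
      refine Finset.prod_congr rfl (fun j _ => ?_)
      simp [sinMat]
    rw [hc, hs]
  rw [Finset.sum_congr rfl (fun σ _ => hσ σ), Matrix.det_apply', Matrix.det_apply']
  rw [← Finset.sum_add_distrib, Finset.sum_div]
  exact Finset.sum_congr rfl (fun σ _ => by ring)

lemma sinMat_det_zero (m : ℕ) (lam : Fin m → ℤ) (θ : Fin m → ℝ) (k0 : Fin m)
    (h : lam k0 = 0) : (sinMat m lam θ).det = 0 :=
  Matrix.det_eq_zero_of_column_eq_zero k0 (fun i => by simp [sinMat, h])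

lemma prod_pairs_succ (n : ℕ) (F : Fin (n+1) → Fin (n+1) → ℂ) :
    (∏ i : Fin (n+1), ∏ j ∈ Finset.Ioi i, F i j) =
      (∏ j : Fin n, F 0 j.succ) * ∏ i : Fin n, ∏ j ∈ Finset.Ioi i, F i.succ j.succ := by
  rw [Fin.prod_univ_succ]
  congr 1
  · rw [Fin.Ioi_zero_eq_map, Finset.prod_map]
    rfl
  · refine Finset.prod_congr rfl (fun i _ => ?_)
    rw [Fin.Ioi_succ, Finset.prod_map]
    rfl

lemma cosMat_lamM (m : ℕ) (hm : 1 ≤ m) (θ : Fin m → ℝ) :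
    cosMat m (fun j => deltaVec m j + (if (j : ℕ) = m - 1 then -1 else 1)) θ =
      cosMat m (fun j => deltaVec m j + 1) θ := by
  ext j k
  by_cases h : (k : ℕ) = m - 1
  · have hd : deltaVec m k = 0 := by
      rw [deltaVec]
      omega
    simp only [cosMat, Matrix.of_apply, if_pos h, hd]
    push_cast
    rw [show (-1 : ℂ) * ((θ j : ℝ) : ℂ) = -((1:ℂ) * ((θ j : ℝ) : ℂ)) by ring,
      Complex.cos_neg]
  · simp [cosMat, h]

lemma sinMat_lamM (m : ℕ) (hm : 1 ≤ m) (θ : Fin m → ℝ) :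
    (sinMat m (fun j => deltaVec m j + (if (j : ℕ) = m - 1 then -1 else 1)) θ).det =
      -(sinMat m (fun j => deltaVec m j + 1) θ).det := by
  have heq : sinMat m (fun j => deltaVec m j + (if (j : ℕ) = m - 1 then -1 else 1)) θ =
      (sinMat m (fun j => deltaVec m j + 1) θ) *
        Matrix.diagonal (fun k : Fin m => if (k : ℕ) = m - 1 then (-1 : ℂ) else 1) := by
    ext j k
    rw [Matrix.mul_diagonal]
    by_cases h : (k : ℕ) = m - 1
    · have hd : deltaVec m k = 0 := by rw [deltaVec]; omega
      simp only [sinMat, Matrix.of_apply, if_pos h, hd]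
      push_cast
      rw [show (-1 : ℂ) * ((θ j : ℝ) : ℂ) = -((1:ℂ) * ((θ j : ℝ) : ℂ)) by ring,
        Complex.sin_neg]
      ring
    · simp [sinMat, h]
  rw [heq, Matrix.det_mul, Matrix.det_diagonal]
  have hp : (∏ k : Fin m, if (k : ℕ) = m - 1 then (-1 : ℂ) else 1) = -1 := by
    rw [Finset.prod_eq_single (⟨m - 1, by omega⟩ : Fin m)]
    · exact if_pos rfl
    · intro b _ hb2
      exact if_neg (fun hb0 => hb2 (Fin.ext hb0))
    · intro h; exact absurd (Finset.mem_univ _) h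
  rw [hp]
  ring

/-- Expansion of `A_δ(θ) · ∏_j (2cosh ℓ − 2cos θ_j)` into the alternating sums
`A_{δ+ω_q}` and `A_{δ+λ⁺}, A_{δ+λ⁻}` (Weyl-character form of the expansion of
`|det(e^{−ℓ/2}I_{2m} − e^{ℓ/2}u)|` into irreducible characters of `SO(2m)`). -/
theorem weyl_discriminant_expansion_even (m : ℕ) (hm : 1 ≤ m) (ℓ : ℝ) (θ : Fin m → ℝ) :
    Avec m (deltaVec m) θ *
      ∏ j : Fin m, ((2 * Real.cosh ℓ - 2 * Real.cos (θ j) : ℝ) : ℂ) =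
    (∑ q ∈ Finset.range m,
      (-1 : ℂ) ^ q *
        ((Real.exp (((m : ℝ) - (q : ℝ)) * ℓ) + Real.exp (((q : ℝ) - (m : ℝ)) * ℓ) : ℝ) : ℂ) *
        Avec m (fun j => deltaVec m j + omegaVec m q j) θ) +
    (-1 : ℂ) ^ m *
      (Avec m (fun j => deltaVec m j + 1) θ +
       Avec m (fun j => deltaVec m j + (if (j : ℕ) = m - 1 then -1 else 1)) θ) := by
  classical
  set φ : Fin (m+1) → ℂ := Fin.cons ((ℓ : ℂ) * Complex.I) (fun j => ((θ j : ℝ) : ℂ)) with hφ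
  set M : Matrix (Fin (m+1)) (Fin (m+1)) ℂ :=
    Matrix.of (fun i q : Fin (m+1) =>
      2 * Complex.cos ((((m+1) - 1 - (q : ℕ) : ℕ) : ℂ) * φ i)) with hM
  have hklast : m - 1 < m := by omega
  -- sine determinant of δ vanishes
  have hAδ : Avec m (deltaVec m) θ = (cosMat m (deltaVec m) θ).det / 2 := by
    rw [avec_eq, sinMat_det_zero m _ θ ⟨m-1, hklast⟩ (by rw [deltaVec]; simp; omega), add_zero]
  -- sine determinants of δ+ω_q vanish
  have hAq : ∀ qm : Fin m, Avec m (fun k => deltaVec m k + omegaVec m (qm : ℕ) k) θ =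
      (cosMat m (fun k => deltaVec m k + omegaVec m (qm : ℕ) k) θ).det / 2 := by
    intro qm
    rw [avec_eq, sinMat_det_zero m _ θ ⟨m-1, hklast⟩ ?_, add_zero]
    rw [deltaVec, omegaVec]
    simp only
    rw [if_neg (by omega)]
    simp
    omega
  -- spin terms
  have hAspin : Avec m (fun j => deltaVec m j + 1) θ +
      Avec m (fun j => deltaVec m j + (if (j : ℕ) = m - 1 then -1 else 1)) θ =
      (cosMat m (fun j => deltaVec m j + 1) θ).det := by
    rw [avec_eq, avec_eq, cosMat_lamM m hm θ, sinMat_lamM m hm θ]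
    ring
  -- cast identification for the δ cosine matrix
  have hCδ : (cosMat m (deltaVec m) θ).det =
      2 * ∏ i : Fin m, ∏ j ∈ Finset.Ioi i,
        (2 * Complex.cos ((θ i : ℝ)) - 2 * Complex.cos ((θ j : ℝ))) := by
    rw [← det_cos_matrix m hm (fun j => ((θ j : ℝ) : ℂ))]
    congr 1
    ext j k
    simp only [cosMat, Matrix.of_apply]
    congr 2
    have h1 : ((m - 1 - (k : ℕ) : ℕ) : ℤ) = deltaVec m k := by
      rw [deltaVec]; omega
    rw [← h1]
    push_cast
    ring
  -- Step B : determinant of big matrix factors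
  have hdetM : M.det =
      (∏ j : Fin m, ((2 * Real.cosh ℓ - 2 * Real.cos (θ j) : ℝ) : ℂ)) *
        (cosMat m (deltaVec m) θ).det := by
    rw [hM, det_cos_matrix (m+1) (by omega) φ,
      prod_pairs_succ m (fun i j => 2 * Complex.cos (φ i) - 2 * Complex.cos (φ j)), hCδ]
    have h0 : ∀ j : Fin m, 2 * Complex.cos (φ 0) - 2 * Complex.cos (φ j.succ) =
        ((2 * Real.cosh ℓ - 2 * Real.cos (θ j) : ℝ) : ℂ) := by
      intro j
      rw [hφ]
      simp only [Fin.cons_zero, Fin.cons_succ]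
      rw [Complex.cos_mul_I]
      push_cast [Complex.ofReal_cosh, Complex.ofReal_cos]
      ring
    have htail : (∏ i : Fin m, ∏ j ∈ Finset.Ioi i,
        (2 * Complex.cos (φ i.succ) - 2 * Complex.cos (φ j.succ))) =
        ∏ i : Fin m, ∏ j ∈ Finset.Ioi i,
          (2 * Complex.cos ((θ i : ℝ)) - 2 * Complex.cos ((θ j : ℝ))) := by
      refine Finset.prod_congr rfl (fun i _ => Finset.prod_congr rfl (fun j _ => ?_))
      rw [hφ]
      simp only [Fin.cons_succ]
    rw [Finset.prod_congr rfl (fun j _ => h0 j), htail]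
    ring
  -- Laplace expansion
  have hlap : M.det = ∑ q : Fin (m+1),
      (-1 : ℂ) ^ (q : ℕ) * M 0 q * (M.submatrix Fin.succ q.succAbove).det :=
    Matrix.det_succ_row_zero M
  -- minors
  have hminor : ∀ q : Fin (m+1), M.submatrix Fin.succ q.succAbove =
      cosMat m (fun k => deltaVec m k + omegaVec m (q : ℕ) k) θ := by
    intro q
    ext j k
    have hval : ((q.succAbove k : Fin (m+1)) : ℕ) =
        if (k : ℕ) < (q : ℕ) then (k : ℕ) else (k : ℕ) + 1 := by
      rcases lt_or_ge ((k : ℕ) : ℕ) ((q : ℕ)) with h | h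
      · rw [if_pos h, Fin.succAbove_of_castSucc_lt]
        · rfl
        · simp only [Fin.lt_def, Fin.coe_castSucc]
          exact h
      · rw [if_neg (not_lt.mpr h), Fin.succAbove_of_le_castSucc]
        · rfl
        · simp only [Fin.le_def, Fin.coe_castSucc]
          exact h
    simp only [Matrix.submatrix_apply, hM, Matrix.of_apply, cosMat, hφ, Fin.cons_succ]
    congr 2
    have h1 : ((m + 1 - 1 - ((q.succAbove k : Fin (m+1)) : ℕ) : ℕ) : ℤ) =
        deltaVec m k + omegaVec m (q : ℕ) k := by
      rw [deltaVec, omegaVec, hval]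
      have hk := k.isLt
      have hq := q.isLt
      split_ifs <;> omega
    rw [← h1]
    push_cast
    ring
  -- row-0 entries
  have hrow : ∀ qm : Fin m, M 0 (Fin.castSucc qm) =
      ((Real.exp (((m : ℝ) - ((qm : ℕ) : ℝ)) * ℓ) +
        Real.exp ((((qm : ℕ) : ℝ) - (m : ℝ)) * ℓ) : ℝ) : ℂ) := by
    intro qm
    simp only [hM, Matrix.of_apply, hφ, Fin.cons_zero]
    have hq : (qm : ℕ) < m := qm.isLt
    have h2 : (((m + 1 - 1 - ((Fin.castSucc qm : Fin (m+1)) : ℕ) : ℕ)) : ℂ) * ((ℓ : ℂ) * Complex.I) =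
        ((((m : ℝ) - ((qm : ℕ) : ℝ)) * ℓ : ℝ) : ℂ) * Complex.I := by
      have h3 : ((m + 1 - 1 - ((Fin.castSucc qm : Fin (m+1)) : ℕ) : ℕ) : ℝ) =
          (m : ℝ) - ((qm : ℕ) : ℝ) := by
        have : ((Fin.castSucc qm : Fin (m+1)) : ℕ) = (qm : ℕ) := rfl
        rw [this]
        have h4 : m + 1 - 1 - (qm : ℕ) = m - (qm : ℕ) := by omega
        rw [h4, Nat.cast_sub (le_of_lt hq)]
      rw [← h3]
      push_cast
      ring
    rw [h2, Complex.cos_mul_I]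
    rw [show (2 : ℂ) * Complex.cosh ((((m : ℝ) - ((qm : ℕ) : ℝ)) * ℓ : ℝ) : ℂ) =
        ((2 * Real.cosh (((m : ℝ) - ((qm : ℕ) : ℝ)) * ℓ) : ℝ) : ℂ) by
      push_cast [Complex.ofReal_cosh]; ring]
    congr 1
    rw [Real.cosh_eq]
    rw [show (((qm : ℕ) : ℝ) - (m : ℝ)) * ℓ = -(((m : ℝ) - ((qm : ℕ) : ℝ)) * ℓ) by ring]
    ring
  -- last entry of row 0
  have hlast_row : M 0 (Fin.last m) = 2 := by
    simp only [hM, Matrix.of_apply, hφ, Fin.cons_zero, Fin.val_last]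
    rw [show (m + 1 - 1 - m : ℕ) = 0 by omega]
    norm_num
  have hlast_omega : (fun k : Fin m => deltaVec m k + omegaVec m m k) =
      (fun k => deltaVec m k + 1) := by
    funext k
    rw [omegaVec, if_pos k.isLt]
  -- Assemble
  have key : Avec m (deltaVec m) θ *
      ∏ j : Fin m, ((2 * Real.cosh ℓ - 2 * Real.cos (θ j) : ℝ) : ℂ) = (1/2) * M.det := by
    rw [hAδ, hdetM]
    ring
  rw [key, hlap, Fin.sum_univ_castSucc]
  have hsum : (∑ qm : Fin m, (-1 : ℂ) ^ ((Fin.castSucc qm : Fin (m+1)) : ℕ) *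
        M 0 (Fin.castSucc qm) * (M.submatrix Fin.succ (Fin.castSucc qm).succAbove).det) =
      ∑ qm : Fin m, (-1 : ℂ) ^ ((qm : ℕ)) *
        ((Real.exp (((m : ℝ) - ((qm : ℕ) : ℝ)) * ℓ) +
          Real.exp ((((qm : ℕ) : ℝ) - (m : ℝ)) * ℓ) : ℝ) : ℂ) *
        (cosMat m (fun k => deltaVec m k + omegaVec m ((qm : ℕ)) k) θ).det := by
    refine Finset.sum_congr rfl (fun qm _ => ?_)
    rw [hrow qm, hminor (Fin.castSucc qm)]
    rfl
  rw [hsum]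
  have hlastterm : (-1 : ℂ) ^ ((Fin.last m : Fin (m+1)) : ℕ) * M 0 (Fin.last m) *
      (M.submatrix Fin.succ (Fin.last m).succAbove).det =
      (-1 : ℂ) ^ m * 2 * (cosMat m (fun k => deltaVec m k + 1) θ).det := by
    rw [hlast_row, hminor (Fin.last m), Fin.val_last, hlast_omega]
  rw [hlastterm]
  -- now rewrite the RHS
  rw [hAspin]
  rw [← Fin.sum_univ_eq_sum_range (fun q =>
    (-1 : ℂ) ^ q *
      ((Real.exp (((m : ℝ) - (q : ℝ)) * ℓ) + Real.exp (((q : ℝ) - (m : ℝ)) * ℓ) : ℝ) : ℂ) *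
      Avec m (fun j => deltaVec m j + omegaVec m q j) θ) m]
  simp only [hAq]
  rw [mul_add, Finset.mul_sum]
  congr 1
  · exact Finset.sum_congr rfl (fun qm _ => by ring)
  · ring
end

section
/- Let 0 < α < 1 and C > 0, and let B ⊆ ℤ \ {0} be a set of nonzero integers such that for every real T ≥ 1 the number of n ∈ B with |n| ≤ T is at most C·T^α. Then: (1) for every z ∈ ℂ the product ∏_{n∈B} (1 − z/n) converges absolutely (the family (1 − z/n)_{n∈B} is multipliable); (2) the function f : ℂ → ℂ defined by f(z) = ∏_{n∈B} (1 − z/n) is entire (complex differentiable on all of ℂ); (3) f(n) = 0 for every n ∈ B; and (4) there exists a constant C' > 0 such that |f(z)| ≤ exp( C'·(1 + |z|)^α ) for all z ∈ ℂ. -/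
open scoped BigOperators

noncomputable section CanonicalProductAux

namespace CanonicalProdAux

/-! ### Elementary real inequalities -/

lemma log_one_add_le {x : ℝ} (hx : 0 ≤ x) : Real.log (1 + x) ≤ x := by
  have := Real.log_le_sub_one_of_pos (x := 1 + x) (by linarith)
  linarith

lemma rpow_add_le {a b γ : ℝ} (ha : 0 ≤ a) (hb : 0 ≤ b) (h0 : 0 ≤ γ) (h1 : γ ≤ 1) :
    (a + b) ^ γ ≤ a ^ γ + b ^ γ := by
  have := NNReal.rpow_add_le_add_rpow (a.toNNReal) (b.toNNReal) h0 h1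
  have h2 : ((a.toNNReal + b.toNNReal : NNReal) : ℝ) = a + b := by
    simp [Real.coe_toNNReal _ ha, Real.coe_toNNReal _ hb]
  calc (a + b) ^ γ = (((a.toNNReal + b.toNNReal : NNReal) : ℝ)) ^ γ := by rw [h2]
    _ = (((a.toNNReal + b.toNNReal) ^ γ : NNReal) : ℝ) := by
        rw [← NNReal.coe_rpow]
    _ ≤ (((a.toNNReal ^ γ + b.toNNReal ^ γ : NNReal)) : ℝ) := by exact_mod_cast this
    _ = a ^ γ + b ^ γ := by
        rw [NNReal.coe_add, NNReal.coe_rpow, NNReal.coe_rpow,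
          Real.coe_toNNReal _ ha, Real.coe_toNNReal _ hb]

lemma log_one_add_le_rpow {x γ : ℝ} (hx : 0 ≤ x) (h0 : 0 < γ) (h1 : γ ≤ 1) :
    Real.log (1 + x) ≤ x ^ γ / γ := by
  have h1x : (0:ℝ) < 1 + x := by linarith
  have key : γ * Real.log (1 + x) ≤ x ^ γ := by
    have h3 := Real.log_le_sub_one_of_pos (Real.rpow_pos_of_pos h1x γ)
    rw [Real.log_rpow h1x] at h3
    have h2 : (1 + x) ^ γ ≤ 1 + x ^ γ := by
      have := rpow_add_le (zero_le_one) hx h0.le h1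
      simpa [Real.one_rpow] using this
    linarith
  rw [le_div_iff₀ h0]
  linarith

lemma pow_rpow_comm {a : ℝ} (ha : 0 ≤ a) (k : ℕ) (γ : ℝ) :
    ((a ^ k : ℝ)) ^ γ = (a ^ γ) ^ k := by
  rw [← Real.rpow_natCast a k, ← Real.rpow_mul ha, mul_comm, Real.rpow_mul ha,
    Real.rpow_natCast]

lemma geom_partial {q : ℝ} (h0 : 0 ≤ q) (h1 : q < 1) (K : ℕ) :
    ∑ k ∈ Finset.range K, q ^ k ≤ (1 - q)⁻¹ := by
  rw [← tsum_geometric_of_lt_one h0 h1]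
  exact Summable.sum_le_tsum _ (fun i _ => pow_nonneg h0 i) (summable_geometric_of_lt_one h0 h1)

lemma geom_tail {q : ℝ} (h0 : 0 ≤ q) (h1 : q < 1) (k0 : ℕ) (F : Finset ℕ)
    (hF : ∀ k ∈ F, k0 ≤ k) : ∑ k ∈ F, q ^ k ≤ q ^ k0 * (1 - q)⁻¹ := by
  classical
  have hinj : Set.InjOn (· - k0) F := by
    intro x hx y hy h
    have hx' := hF x hx; have hy' := hF y hy
    simp only at h
    omega
  have h1' : ∑ j ∈ F.image (· - k0), q ^ (j + k0) = ∑ k ∈ F, q ^ ((k - k0) + k0) :=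
    Finset.sum_image (fun x hx y hy h => hinj hx hy h)
  have h2 : ∑ k ∈ F, q ^ ((k - k0) + k0) = ∑ k ∈ F, q ^ k := by
    apply Finset.sum_congr rfl
    intro k hk
    have := hF k hk
    congr 1
    omega
  calc ∑ k ∈ F, q ^ k = ∑ j ∈ F.image (· - k0), q ^ (j + k0) := by rw [h1', h2]
    _ = q ^ k0 * ∑ j ∈ F.image (· - k0), q ^ j := by
        rw [Finset.mul_sum]
        apply Finset.sum_congr rfl
        intro j _
        rw [pow_add]; ring
    _ ≤ q ^ k0 * (1 - q)⁻¹ := by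
        apply mul_le_mul_of_nonneg_left _ (pow_nonneg h0 _)
        rw [← tsum_geometric_of_lt_one h0 h1]
        exact Summable.sum_le_tsum _ (fun i _ => pow_nonneg h0 i) (summable_geometric_of_lt_one h0 h1)

lemma clog_bounds {r : ℝ} (hr : 1 ≤ r) :
    r ≤ (2:ℝ) ^ (Nat.clog 2 ⌈r⌉₊) ∧ (2:ℝ) ^ (Nat.clog 2 ⌈r⌉₊) ≤ 4 * r := by
  set n := ⌈r⌉₊ with hn
  have hn1 : 1 ≤ n := Nat.one_le_ceil_iff.mpr (by linarith)
  constructor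
  · calc r ≤ (n : ℝ) := Nat.le_ceil r
      _ ≤ ((2 ^ Nat.clog 2 n : ℕ) : ℝ) := by exact_mod_cast Nat.le_pow_clog one_lt_two n
      _ = (2:ℝ) ^ (Nat.clog 2 n) := by push_cast; ring
  · have key : (2:ℕ) ^ (Nat.clog 2 n) ≤ 2 * n := by
      rcases Nat.eq_zero_or_pos (Nat.clog 2 n) with h | h
      · rw [h]; omega
      · have hn2 : 1 < n := by
          by_contra hc
          have : n = 1 := by omega
          rw [this] at h
          simp [Nat.clog_one_right] at h
        have := Nat.pow_pred_clog_lt_self (b := 2) one_lt_two hn2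
        rw [Nat.pred_eq_sub_one] at this
        have h2 : 2 ^ (Nat.clog 2 n) = 2 * 2 ^ (Nat.clog 2 n - 1) := by
          rw [← pow_succ']
          congr 1
          omega
        omega
    have hcast : ((2:ℕ) ^ (Nat.clog 2 n) : ℝ) ≤ 2 * (n:ℝ) := by exact_mod_cast key
    have hceil : (n : ℝ) < r + 1 := Nat.ceil_lt_add_one (by linarith)
    push_cast at hcast
    nlinarith

/-! ### Counting lemmas -/

lemma finite_ball_int (T : ℝ) : {n : ℤ | |(n : ℝ)| ≤ T}.Finite := by
  apply Set.Finite.subset (Set.finite_Icc (-(⌈T⌉)) ⌈T⌉)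
  intro n hn
  simp only [Set.mem_setOf_eq, abs_le] at hn
  constructor
  · have : (-(⌈T⌉:ℝ)) ≤ (n:ℝ) := le_trans (by exact_mod_cast neg_le_neg (Int.le_ceil T)) hn.1
    exact_mod_cast this
  · exact_mod_cast hn.2.trans (Int.le_ceil T)

lemma abs_cast_natAbs (n : ℤ) : |(n:ℝ)| = (n.natAbs : ℝ) := by
  rw [← Int.cast_abs, Int.abs_eq_natAbs, Int.cast_natCast]

lemma card_le_count {B : Set ℤ} {α C : ℝ}
    (hcount : ∀ T : ℝ, 1 ≤ T →
      (({n : ℤ | n ∈ B ∧ |(n : ℝ)| ≤ T}).ncard : ℝ) ≤ C * T ^ α)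
    {T : ℝ} (hT : 1 ≤ T) (F : Finset ℤ)
    (hF : ∀ n ∈ F, n ∈ B ∧ |(n : ℝ)| ≤ T) :
    (F.card : ℝ) ≤ C * T ^ α := by
  have hfin : {n : ℤ | n ∈ B ∧ |(n : ℝ)| ≤ T}.Finite :=
    (finite_ball_int T).subset (fun n hn => hn.2)
  have h1 : (F : Set ℤ) ⊆ {n : ℤ | n ∈ B ∧ |(n : ℝ)| ≤ T} := fun n hn => hF n (by exact_mod_cast hn)
  have h2 : F.card = (F : Set ℤ).ncard := (Set.ncard_coe_finset F).symm
  have h3 : (F : Set ℤ).ncard ≤ {n : ℤ | n ∈ B ∧ |(n : ℝ)| ≤ T}.ncard :=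
    Set.ncard_le_ncard h1 hfin
  calc (F.card : ℝ) ≤ ({n : ℤ | n ∈ B ∧ |(n : ℝ)| ≤ T}.ncard : ℝ) := by
        rw [h2]; exact_mod_cast h3
    _ ≤ C * T ^ α := hcount T hT

/-! ### The master dyadic summation lemma -/

lemma master {B : Set ℤ} (hB0 : (0:ℤ) ∉ B) {α C : ℝ}
    (hcount : ∀ T : ℝ, 1 ≤ T →
      (({n : ℤ | n ∈ B ∧ |(n : ℝ)| ≤ T}).ncard : ℝ) ≤ C * T ^ α)
    (b : ℕ → ℝ) (hb : ∀ k, 0 ≤ b k) (S : ℝ)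
    (hS : ∀ K : ℕ, ∑ k ∈ Finset.range K, C * ((2:ℝ) ^ (k+1)) ^ α * b k ≤ S)
    (w : ℤ → ℝ) (hw0 : ∀ n, 0 ≤ w n)
    (hwb : ∀ n ∈ B, w n ≤ b (Nat.log 2 n.natAbs)) :
    Summable (fun n : B => w n) ∧ (∑' n : B, w n) ≤ S := by
  have key : ∀ F : Finset ℤ, (∀ n ∈ F, n ∈ B) → ∑ n ∈ F, w n ≤ S := by
    intro F hFB
    classical
    set K := (F.sup fun n => Nat.log 2 n.natAbs) + 1 with hK
    have hmaps : ∀ n ∈ F, Nat.log 2 n.natAbs ∈ Finset.range K := by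
      intro n hn
      simp only [Finset.mem_range, hK]
      exact Nat.lt_succ_of_le (Finset.le_sup (f := fun n => Nat.log 2 n.natAbs) hn)
    rw [← Finset.sum_fiberwise_of_maps_to hmaps]
    have hinner : ∀ k ∈ Finset.range K,
        ∑ n ∈ F.filter (fun n => Nat.log 2 n.natAbs = k), w n
          ≤ C * ((2:ℝ) ^ (k+1)) ^ α * b k := by
      intro k _
      set G := F.filter (fun n => Nat.log 2 n.natAbs = k) with hG
      have hGsub : ∀ n ∈ G, n ∈ B ∧ |(n:ℝ)| ≤ (2:ℝ)^(k+1) := by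
        intro n hn
        rw [hG, Finset.mem_filter] at hn
        refine ⟨hFB n hn.1, ?_⟩
        have hne : n ≠ 0 := fun h => hB0 (h ▸ hFB n hn.1)
        have h1 : n.natAbs < 2 ^ (k+1) := by
          rw [← hn.2]
          exact Nat.lt_pow_succ_log_self (by norm_num) n.natAbs
        rw [abs_cast_natAbs]
        calc (n.natAbs : ℝ) ≤ ((2^(k+1) : ℕ) : ℝ) := by exact_mod_cast h1.le
          _ = (2:ℝ)^(k+1) := by push_cast; ring
      have hcard : (G.card : ℝ) ≤ C * ((2:ℝ)^(k+1)) ^ α := by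
        have h2 : (1:ℝ) ≤ (2:ℝ)^(k+1) := one_le_pow₀ (by norm_num)
        exact card_le_count hcount h2 G hGsub
      have hterm : ∀ n ∈ G, w n ≤ b k := by
        intro n hn
        rw [hG, Finset.mem_filter] at hn
        have := hwb n (hFB n hn.1)
        rwa [hn.2] at this
      calc ∑ n ∈ G, w n ≤ ∑ _n ∈ G, b k := Finset.sum_le_sum hterm
        _ = G.card * b k := by rw [Finset.sum_const, nsmul_eq_mul]
        _ ≤ C * ((2:ℝ)^(k+1)) ^ α * b k := mul_le_mul_of_nonneg_right hcard (hb k)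
    exact le_trans (Finset.sum_le_sum hinner) (hS K)
  have hsummable : Summable (fun n : B => w n) := by
    apply summable_of_sum_le (c := S) (fun n => hw0 _)
    intro u
    classical
    have := key (u.image Subtype.val) (by
      intro n hn
      rcases Finset.mem_image.mp hn with ⟨m, _, rfl⟩
      exact m.2)
    rwa [Finset.sum_image (fun x _ y _ h => Subtype.val_injective h)] at this
  refine ⟨hsummable, hsummable.tsum_le_of_sum_le ?_⟩
  intro u
  classical
  have := key (u.image Subtype.val) (by
    intro n hn
    rcases Finset.mem_image.mp hn with ⟨m, _, rfl⟩
    exact m.2)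
  rwa [Finset.sum_image (fun x _ y _ h => Subtype.val_injective h)] at this

/-! ### The two series estimates -/

lemma hS_one {α C : ℝ} (hα1 : α < 1) (hC : 0 < C) (K : ℕ) :
    ∑ k ∈ Finset.range K, C * ((2:ℝ) ^ (k+1)) ^ α * ((2:ℝ) ^ k)⁻¹
      ≤ C * (2:ℝ) ^ α * (1 - (2:ℝ) ^ α * 2⁻¹)⁻¹ := by
  have h2α : (0:ℝ) < (2:ℝ) ^ α := Real.rpow_pos_of_pos two_pos α
  have hqlt : (2:ℝ) ^ α * 2⁻¹ < 1 := by
    have := Real.rpow_lt_rpow_of_exponent_lt (x := (2:ℝ)) one_lt_two hα1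
    rw [Real.rpow_one] at this
    nlinarith
  have hq0 : (0:ℝ) ≤ (2:ℝ) ^ α * 2⁻¹ := by positivity
  have hterm : ∀ k ∈ Finset.range K,
      C * ((2:ℝ) ^ (k+1)) ^ α * ((2:ℝ) ^ k)⁻¹
        = (C * (2:ℝ) ^ α) * ((2:ℝ) ^ α * 2⁻¹) ^ k := by
    intro k _
    rw [pow_rpow_comm (by norm_num), pow_succ, ← inv_pow, mul_pow]
    ring
  rw [Finset.sum_congr rfl hterm, ← Finset.mul_sum]
  have := geom_partial hq0 hqlt K
  have hpos : (0:ℝ) < C * (2:ℝ) ^ α := by positivity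
  calc (C * (2:ℝ)^α) * ∑ k ∈ Finset.range K, ((2:ℝ)^α * 2⁻¹)^k
      ≤ (C * (2:ℝ)^α) * (1 - (2:ℝ)^α * 2⁻¹)⁻¹ := by
        exact mul_le_mul_of_nonneg_left this hpos.le
    _ = C * (2:ℝ)^α * (1 - (2:ℝ)^α * 2⁻¹)⁻¹ := by ring

lemma hS_two {α C : ℝ} (hα0 : 0 < α) (hα1 : α < 1) (hC : 0 < C)
    {r : ℝ} (hr : 1 ≤ r) (K : ℕ) :
    ∑ k ∈ Finset.range K, C * ((2:ℝ) ^ (k+1)) ^ α * Real.log (1 + r * ((2:ℝ) ^ k)⁻¹)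
      ≤ (C * (2:ℝ)^α * (4 / ((α/2) * ((2:ℝ)^(α/2) - 1)) + (1 - (2:ℝ)^α * 2⁻¹)⁻¹)) * r ^ α := by
  classical
  have hr0 : (0:ℝ) < r := by linarith
  set γ : ℝ := α / 2 with hγ
  have hγ0 : 0 < γ := by positivity
  have hγ1 : γ ≤ 1 := by rw [hγ]; linarith
  have h2α : (0:ℝ) < (2:ℝ) ^ α := Real.rpow_pos_of_pos two_pos α
  set q₁ : ℝ := (2:ℝ) ^ γ with hq₁
  have hq₁gt : 1 < q₁ := Real.one_lt_rpow_iff_of_pos two_pos |>.mpr (Or.inl ⟨one_lt_two, hγ0⟩)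
  set q : ℝ := (2:ℝ) ^ α * 2⁻¹ with hq
  have hqlt : q < 1 := by
    have := Real.rpow_lt_rpow_of_exponent_lt (x := (2:ℝ)) one_lt_two hα1
    rw [Real.rpow_one] at this
    rw [hq]; nlinarith
  have hq0 : (0:ℝ) ≤ q := by positivity
  set k0 : ℕ := Nat.clog 2 ⌈r⌉₊ with hk0
  obtain ⟨hrle, hle4r⟩ := clog_bounds hr
  have hhead : ∀ k : ℕ, C * ((2:ℝ) ^ (k+1)) ^ α * Real.log (1 + r * ((2:ℝ) ^ k)⁻¹)
      ≤ (C * (2:ℝ)^α * (r ^ γ) / γ) * q₁ ^ k := by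
    intro k
    have hx : (0:ℝ) ≤ r * ((2:ℝ)^k)⁻¹ := by positivity
    have hlog := log_one_add_le_rpow hx hγ0 hγ1
    have hrw : (r * ((2:ℝ)^k)⁻¹) ^ γ = r ^ γ * (((2:ℝ)^γ)⁻¹) ^ k := by
      rw [Real.mul_rpow hr0.le (by positivity), ← inv_pow,
        pow_rpow_comm (by norm_num : (0:ℝ) ≤ 2⁻¹), Real.inv_rpow (by norm_num)]
    have hpow : ((2:ℝ) ^ (k+1)) ^ α = (2:ℝ)^α * ((2:ℝ)^α) ^ k := by
      rw [pow_rpow_comm (by norm_num : (0:ℝ) ≤ 2), pow_succ]; ring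
    have hcomb : ((2:ℝ)^α) ^ k * (((2:ℝ)^γ)⁻¹) ^ k = q₁ ^ k := by
      rw [← mul_pow]
      congr 1
      rw [hq₁, ← Real.rpow_neg (by norm_num : (0:ℝ) ≤ 2) γ, ← Real.rpow_add two_pos]
      congr 1
      rw [hγ]; ring
    calc C * ((2:ℝ) ^ (k+1)) ^ α * Real.log (1 + r * ((2:ℝ) ^ k)⁻¹)
        ≤ C * ((2:ℝ) ^ (k+1)) ^ α * ((r * ((2:ℝ)^k)⁻¹) ^ γ / γ) := by
          apply mul_le_mul_of_nonneg_left hlog (by positivity)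
      _ = (C * (2:ℝ)^α * (r ^ γ) / γ) * (((2:ℝ)^α) ^ k * (((2:ℝ)^γ)⁻¹) ^ k) := by
          rw [hrw, hpow]; ring
      _ = (C * (2:ℝ)^α * (r ^ γ) / γ) * q₁ ^ k := by rw [hcomb]
  have htail : ∀ k : ℕ, C * ((2:ℝ) ^ (k+1)) ^ α * Real.log (1 + r * ((2:ℝ) ^ k)⁻¹)
      ≤ (C * (2:ℝ)^α * r) * q ^ k := by
    intro k
    have hx : (0:ℝ) ≤ r * ((2:ℝ)^k)⁻¹ := by positivity
    have hlog := log_one_add_le hx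
    have hpow : ((2:ℝ) ^ (k+1)) ^ α = (2:ℝ)^α * ((2:ℝ)^α) ^ k := by
      rw [pow_rpow_comm (by norm_num : (0:ℝ) ≤ 2), pow_succ]; ring
    calc C * ((2:ℝ) ^ (k+1)) ^ α * Real.log (1 + r * ((2:ℝ) ^ k)⁻¹)
        ≤ C * ((2:ℝ) ^ (k+1)) ^ α * (r * ((2:ℝ)^k)⁻¹) := by
          apply mul_le_mul_of_nonneg_left hlog (by positivity)
      _ = (C * (2:ℝ)^α * r) * (((2:ℝ)^α) ^ k * (2⁻¹) ^ k) := by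
          rw [hpow, ← inv_pow]; ring
      _ = (C * (2:ℝ)^α * r) * q ^ k := by rw [← mul_pow]
  rw [← Finset.sum_filter_add_sum_filter_not (Finset.range K) (fun k => k < k0)]
  have hheadsum : ∑ k ∈ (Finset.range K).filter (fun k => k < k0),
      C * ((2:ℝ) ^ (k+1)) ^ α * Real.log (1 + r * ((2:ℝ) ^ k)⁻¹)
        ≤ (C * (2:ℝ)^α * (4 / (γ * (q₁ - 1)))) * r ^ α := by
    have h1 : ∑ k ∈ (Finset.range K).filter (fun k => k < k0),
        C * ((2:ℝ) ^ (k+1)) ^ α * Real.log (1 + r * ((2:ℝ) ^ k)⁻¹)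
          ≤ ∑ k ∈ (Finset.range K).filter (fun k => k < k0),
              (C * (2:ℝ)^α * (r ^ γ) / γ) * q₁ ^ k :=
      Finset.sum_le_sum (fun k _ => hhead k)
    have h2 : ∑ k ∈ (Finset.range K).filter (fun k => k < k0),
        (C * (2:ℝ)^α * (r ^ γ) / γ) * q₁ ^ k
          ≤ ∑ k ∈ Finset.range k0, (C * (2:ℝ)^α * (r ^ γ) / γ) * q₁ ^ k := by
      apply Finset.sum_le_sum_of_subset_of_nonneg
      · intro k hk
        simp only [Finset.mem_filter, Finset.mem_range] at hk ⊢
        exact hk.2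
      · intro k _ _
        have : (0:ℝ) < q₁ := lt_trans one_pos hq₁gt
        positivity
    have h3 : ∑ k ∈ Finset.range k0, q₁ ^ k ≤ q₁ ^ k0 / (q₁ - 1) := by
      rw [geom_sum_eq (ne_of_gt hq₁gt)]
      apply div_le_div_of_nonneg_right _ (by linarith)
      · linarith [pow_pos (lt_trans one_pos hq₁gt) k0]
    have h4 : q₁ ^ k0 ≤ 4 * r ^ γ := by
      have e1 : q₁ ^ k0 = ((2:ℝ) ^ k0) ^ γ := (pow_rpow_comm (by norm_num) k0 γ).symm
      have e2 : ((2:ℝ) ^ k0) ^ γ ≤ (4 * r) ^ γ :=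
        Real.rpow_le_rpow (by positivity) hle4r hγ0.le
      have e3 : (4 * r) ^ γ = 4 ^ γ * r ^ γ := Real.mul_rpow (by norm_num) hr0.le
      have e4 : (4:ℝ) ^ γ ≤ 4 := by
        calc (4:ℝ) ^ γ ≤ (4:ℝ) ^ (1:ℝ) :=
              Real.rpow_le_rpow_of_exponent_le (by norm_num) hγ1
          _ = 4 := Real.rpow_one 4
      have : (0:ℝ) ≤ r ^ γ := Real.rpow_nonneg hr0.le γ
      nlinarith
    have hrγ : r ^ γ * r ^ γ = r ^ α := by
      rw [← Real.rpow_add hr0]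
      congr 1
      rw [hγ]; ring
    have hcoef : (0:ℝ) ≤ C * (2:ℝ)^α * (r ^ γ) / γ := by positivity
    calc ∑ k ∈ (Finset.range K).filter (fun k => k < k0),
        C * ((2:ℝ) ^ (k+1)) ^ α * Real.log (1 + r * ((2:ℝ) ^ k)⁻¹)
        ≤ ∑ k ∈ Finset.range k0, (C * (2:ℝ)^α * (r ^ γ) / γ) * q₁ ^ k := le_trans h1 h2
      _ = (C * (2:ℝ)^α * (r ^ γ) / γ) * ∑ k ∈ Finset.range k0, q₁ ^ k := by
          rw [Finset.mul_sum]
      _ ≤ (C * (2:ℝ)^α * (r ^ γ) / γ) * (q₁ ^ k0 / (q₁ - 1)) :=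
          mul_le_mul_of_nonneg_left h3 hcoef
      _ ≤ (C * (2:ℝ)^α * (r ^ γ) / γ) * ((4 * r ^ γ) / (q₁ - 1)) := by
          apply mul_le_mul_of_nonneg_left _ hcoef
          apply div_le_div_of_nonneg_right h4 (by linarith)
      _ = (C * (2:ℝ)^α * (4 / (γ * (q₁ - 1)))) * (r ^ γ * r ^ γ) := by
          field_simp
      _ = (C * (2:ℝ)^α * (4 / (γ * (q₁ - 1)))) * r ^ α := by rw [hrγ]
  have htailsum : ∑ k ∈ (Finset.range K).filter (fun k => ¬ k < k0),
      C * ((2:ℝ) ^ (k+1)) ^ α * Real.log (1 + r * ((2:ℝ) ^ k)⁻¹)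
        ≤ (C * (2:ℝ)^α * (1 - q)⁻¹) * r ^ α := by
    have h1 : ∑ k ∈ (Finset.range K).filter (fun k => ¬ k < k0),
        C * ((2:ℝ) ^ (k+1)) ^ α * Real.log (1 + r * ((2:ℝ) ^ k)⁻¹)
          ≤ ∑ k ∈ (Finset.range K).filter (fun k => ¬ k < k0), (C * (2:ℝ)^α * r) * q ^ k :=
      Finset.sum_le_sum (fun k _ => htail k)
    have h2 : ∑ k ∈ (Finset.range K).filter (fun k => ¬ k < k0), q ^ k
        ≤ q ^ k0 * (1 - q)⁻¹ := by
      apply geom_tail hq0 hqlt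
      intro k hk
      simp only [Finset.mem_filter, Finset.mem_range, not_lt] at hk
      exact hk.2
    have h4 : q ^ k0 ≤ r ^ (α - 1) := by
      have e0 : q = (2:ℝ) ^ (α - 1) := by
        rw [hq, Real.rpow_sub two_pos, Real.rpow_one]
        ring
      have e1 : q ^ k0 = ((2:ℝ) ^ k0) ^ (α - 1) := by
        rw [e0, ← pow_rpow_comm (by norm_num : (0:ℝ) ≤ 2)]
      rw [e1]
      exact Real.rpow_le_rpow_of_nonpos hr0 hrle (by linarith)
    have hrr : r * r ^ (α - 1) = r ^ α := by
      nth_rewrite 1 [← Real.rpow_one r]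
      rw [← Real.rpow_add hr0]
      congr 1
      ring
    have hcoef : (0:ℝ) ≤ C * (2:ℝ)^α * r := by positivity
    have hinv : (0:ℝ) ≤ (1 - q)⁻¹ := by
      apply inv_nonneg.mpr; linarith
    calc ∑ k ∈ (Finset.range K).filter (fun k => ¬ k < k0),
        C * ((2:ℝ) ^ (k+1)) ^ α * Real.log (1 + r * ((2:ℝ) ^ k)⁻¹)
        ≤ (C * (2:ℝ)^α * r) * ∑ k ∈ (Finset.range K).filter (fun k => ¬ k < k0), q ^ k := by
          rw [← Finset.mul_sum] at h1; exact h1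
      _ ≤ (C * (2:ℝ)^α * r) * (q ^ k0 * (1 - q)⁻¹) := mul_le_mul_of_nonneg_left h2 hcoef
      _ ≤ (C * (2:ℝ)^α * r) * (r ^ (α - 1) * (1 - q)⁻¹) := by
          apply mul_le_mul_of_nonneg_left _ hcoef
          exact mul_le_mul_of_nonneg_right h4 hinv
      _ = (C * (2:ℝ)^α * (1 - q)⁻¹) * (r * r ^ (α - 1)) := by ring
      _ = (C * (2:ℝ)^α * (1 - q)⁻¹) * r ^ α := by rw [hrr]
  have := add_le_add hheadsum htailsum
  calc _ ≤ (C * (2:ℝ)^α * (4 / (γ * (q₁ - 1)))) * r ^ α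
      + (C * (2:ℝ)^α * (1 - q)⁻¹) * r ^ α := this
    _ = (C * (2:ℝ)^α * (4 / (γ * (q₁ - 1)) + (1 - q)⁻¹)) * r ^ α := by ring

/-! ### Products with a zero factor -/

lemma hasProd_zero_of_exists_zero {ι : Type*} (f : ι → ℂ) (i0 : ι) (h : f i0 = 0) :
    HasProd f 0 := by
  classical
  have hev : ∀ᶠ s in Filter.atTop, ∏ i ∈ s, f i = (0:ℂ) := by
    rw [Filter.eventually_atTop]
    exact ⟨{i0}, fun s hs => Finset.prod_eq_zero (hs (Finset.mem_singleton_self i0)) h⟩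
  exact (Filter.Tendsto.congr' (Filter.EventuallyEq.symm hev) tendsto_const_nhds)

/-! ### Differentiability of finite products -/

lemma differentiable_finset_prod {ι : Type*} (t : Finset ι) (F : ι → ℂ → ℂ)
    (h : ∀ i ∈ t, Differentiable ℂ (F i)) :
    Differentiable ℂ (fun z => ∏ i ∈ t, F i z) := by
  classical
  induction t using Finset.induction_on with
  | empty => simpa using differentiable_const (1:ℂ)
  | @insert a u ha ih =>
    simp_rw [Finset.prod_insert ha]
    exact (h a (Finset.mem_insert_self a u)).mul
      (ih (fun i hi => h i (Finset.mem_insert_of_mem hi)))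

/-! ### Decomposition of the canonical product on a ball -/

lemma decomp {B : Set ℤ}
    (h1 : Summable (fun n : B => |((n : ℤ):ℝ)|⁻¹)) {R : ℝ} (hR : 0 < R) :
    ∃ s : Set ↥B, s.Finite ∧
      DifferentiableOn ℂ
        (fun z : ℂ => ∑' n : ↥sᶜ, Complex.log (1 - z / (((n : ↥B) : ℤ) : ℂ)))
        (Metric.ball 0 R) ∧
      ∀ z : ℂ, ‖z‖ < R →
        HasProd (fun n : B => 1 - z / ((n : ℤ) : ℂ))
          ((∏' n : s, (1 - z / (((n : ↥B) : ℤ) : ℂ))) *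
            Complex.exp (∑' n : ↥sᶜ, Complex.log (1 - z / (((n : ↥B) : ℤ) : ℂ)))) := by
  classical
  open Complex in
  set s : Set ↥B := {n : ↥B | |((n:ℤ):ℝ)| ≤ 2*R} with hs
  have hfin : s.Finite := by
    have : s = (Subtype.val : ↥B → ℤ) ⁻¹' {m : ℤ | |(m:ℝ)| ≤ 2*R} := rfl
    rw [this]
    exact Set.Finite.preimage (Set.injOn_of_injective Subtype.val_injective)
      (finite_ball_int (2*R))
  have hcompl : ∀ (n : ↥(sᶜ)) (z : ℂ), ‖z‖ < R →
      ‖z / (((n : ↥B):ℤ):ℂ)‖ < 1/2 ∧ (1 - z / (((n : ↥B):ℤ):ℂ)) ≠ 0 ∧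
      (1 - z / (((n : ↥B):ℤ):ℂ)) ∈ slitPlane ∧
      ‖Complex.log (1 - z / (((n : ↥B):ℤ):ℂ))‖ ≤ (3/2) * R * |(((n : ↥B):ℤ):ℝ)|⁻¹ := by
    intro n z hz
    have hn2R : 2*R < |(((n : ↥B):ℤ):ℝ)| := by
      have := n.2
      simp only [hs, Set.mem_compl_iff, Set.mem_setOf_eq, not_le] at this
      exact this
    have habs_pos : (0:ℝ) < |(((n : ↥B):ℤ):ℝ)| := by linarith
    have hnorm : ‖z / (((n : ↥B):ℤ):ℂ)‖ = ‖z‖ * |(((n : ↥B):ℤ):ℝ)|⁻¹ := by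
      rw [norm_div, Complex.norm_intCast, div_eq_mul_inv]
    have hlt : ‖z / (((n : ↥B):ℤ):ℂ)‖ < 1/2 := by
      rw [hnorm]
      rw [mul_inv_lt_iff₀ habs_pos]
      nlinarith
    have hne : (1 - z / (((n : ↥B):ℤ):ℂ)) ≠ 0 := by
      intro h
      have : (1:ℂ) = z / (((n : ↥B):ℤ):ℂ) := by
        rw [sub_eq_zero] at h; exact h
      have h2 : ‖(1:ℂ)‖ < 1/2 := this ▸ hlt
      simp at h2
      linarith
    have hre : (1/2 : ℝ) < (1 - z / (((n : ↥B):ℤ):ℂ)).re := by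
      have h1' : (1 - z / (((n : ↥B):ℤ):ℂ)).re = 1 - (z / (((n : ↥B):ℤ):ℂ)).re := by
        simp [Complex.sub_re]
      have h2' : (z / (((n : ↥B):ℤ):ℂ)).re ≤ ‖z / (((n : ↥B):ℤ):ℂ)‖ :=
        Complex.re_le_norm _
      rw [h1']
      linarith
    have hslit : (1 - z / (((n : ↥B):ℤ):ℂ)) ∈ slitPlane := Or.inl (by linarith)
    refine ⟨hlt, hne, hslit, ?_⟩
    have := Complex.norm_log_one_add_half_le_self
      (z := -(z / (((n : ↥B):ℤ):ℂ))) (by rw [norm_neg]; linarith)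
    rw [← sub_eq_add_neg] at this
    calc ‖Complex.log (1 - z / (((n : ↥B):ℤ):ℂ))‖
        ≤ 3/2 * ‖-(z / (((n : ↥B):ℤ):ℂ))‖ := this
      _ = 3/2 * (‖z‖ * |(((n : ↥B):ℤ):ℝ)|⁻¹) := by rw [norm_neg, hnorm]
      _ ≤ 3/2 * (R * |(((n : ↥B):ℤ):ℝ)|⁻¹) := by
          apply mul_le_mul_of_nonneg_left _ (by norm_num)
          apply mul_le_mul_of_nonneg_right hz.le (by positivity)
      _ = (3/2) * R * |(((n : ↥B):ℤ):ℝ)|⁻¹ := by ring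
  have hu : Summable (fun n : ↥(sᶜ) => (3/2) * R * |(((n : ↥B):ℤ):ℝ)|⁻¹) := by
    have := (h1.mul_left ((3/2) * R)).subtype (sᶜ)
    exact this.congr (fun n => rfl)
  have hlogsum : ∀ z : ℂ, ‖z‖ < R →
      Summable (fun n : ↥(sᶜ) => Complex.log (1 - z / (((n : ↥B):ℤ):ℂ))) := by
    intro z hz
    apply Summable.of_norm_bounded hu
    intro n
    exact (hcompl n z hz).2.2.2
  set F : ↥(sᶜ) → ↥(Metric.ball (0:ℂ) R) → ℂ :=
    fun n x => 1 - (x:ℂ) / (((n : ↥B):ℤ):ℂ) with hF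
  have hball : ∀ x : ↥(Metric.ball (0:ℂ) R), ‖(x:ℂ)‖ < R := by
    intro x
    have := x.2
    rwa [Metric.mem_ball, dist_zero_right] at this
  have hfn : ∀ (x : ↥(Metric.ball (0:ℂ) R)) (n : ↥(sᶜ)), F n x ≠ 0 :=
    fun x n => (hcompl n x (hball x)).2.1
  have hf : ∀ x : ↥(Metric.ball (0:ℂ) R), Summable fun n => Complex.log (F n x) :=
    fun x => hlogsum x (hball x)
  have heq : (Complex.exp ∘ fun a => ∑' n, Complex.log (F n a)) = fun a => ∏' n, F n a :=
    funext fun x => Complex.cexp_tsum_eq_tprod (hfn x) (hf x)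
  have hM : ∀ x : ↥(Metric.ball (0:ℂ) R), Multipliable fun n => F n x :=
    fun x => Complex.multipliable_of_summable_log (hf x)
  refine ⟨s, hfin, ?_, ?_⟩
  · apply differentiableOn_tsum_of_summable_norm hu
    · intro n
      intro z hz
      apply DifferentiableAt.differentiableWithinAt
      apply DifferentiableAt.clog
      · exact (differentiableAt_const 1).sub (differentiableAt_id.div_const _)
      · have hz' : ‖z‖ < R := by rwa [Metric.mem_ball, dist_zero_right] at hz
        exact (hcompl n z hz').2.2.1
    · exact Metric.isOpen_ball
    · intro n w hw
      have hw' : ‖w‖ < R := by rwa [Metric.mem_ball, dist_zero_right] at hw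
      exact (hcompl n w hw').2.2.2
  · intro z hz
    set x : ↥(Metric.ball (0:ℂ) R) := ⟨z, by rwa [Metric.mem_ball, dist_zero_right]⟩ with hx
    haveI : Finite ↥s := hfin.to_subtype
    set f : ↥B → ℂ := fun n => 1 - z / ((n : ℤ) : ℂ) with hf_def
    have hM_s : Multipliable (f ∘ ((↑) : ↥s → ↥B)) := Multipliable.of_finite
    have hProd_s : HasProd (f ∘ ((↑) : ↥s → ↥B))
        (∏' n : s, (1 - z / (((n : ↥B):ℤ):ℂ))) := hM_s.hasProd
    have hProd_c : HasProd (f ∘ ((↑) : ↥(sᶜ) → ↥B))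
        (Complex.exp (∑' n : ↥(sᶜ), Complex.log (1 - z / (((n : ↥B):ℤ):ℂ)))) := by
      have h2 := (hM x).hasProd
      have h3 : (∏' n : ↥(sᶜ), F n x) =
          Complex.exp (∑' n : ↥(sᶜ), Complex.log (F n x)) := (congrFun heq x).symm
      rw [h3] at h2
      exact h2
    exact HasProd.mul_compl hProd_s hProd_c

end CanonicalProdAux

end CanonicalProductAux

open CanonicalProdAux in
/-- For a set `B` of nonzero integers with counting function at most `C·T^α`
(`0 < α < 1`): the family `(1 − z/n)_{n ∈ B}` is absolutely convergent and
multipliable for every `z`; the function `z ↦ ∏_{n∈B} (1 − z/n)` is entire;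
it vanishes on `B`; and it is bounded by `exp(C'(1+|z|)^α)` for some `C' > 0`. -/
theorem canonical_product_entire_vanishing
    (α C : ℝ) (hα0 : 0 < α) (hα1 : α < 1) (hC : 0 < C)
    (B : Set ℤ) (hB0 : (0 : ℤ) ∉ B)
    (hcount : ∀ T : ℝ, 1 ≤ T →
      (({n : ℤ | n ∈ B ∧ |(n : ℝ)| ≤ T}).ncard : ℝ) ≤ C * T ^ α) :
    (∀ z : ℂ, Summable (fun n : B => ‖z / ((n : ℤ) : ℂ)‖)) ∧
    (∀ z : ℂ, Multipliable (fun n : B => 1 - z / ((n : ℤ) : ℂ))) ∧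
    Differentiable ℂ (fun z : ℂ => ∏' n : B, (1 - z / ((n : ℤ) : ℂ))) ∧
    (∀ n : ℤ, n ∈ B → (∏' k : B, (1 - (n : ℂ) / ((k : ℤ) : ℂ))) = 0) ∧
    (∃ C' : ℝ, 0 < C' ∧
      ∀ z : ℂ, ‖∏' n : B, (1 - z / ((n : ℤ) : ℂ))‖ ≤
        Real.exp (C' * (1 + ‖z‖) ^ α)) := by
  classical
  -- basic facts about elements of B
  have hBne : ∀ n : ℤ, n ∈ B → n ≠ 0 := fun n hn h => hB0 (h ▸ hn)
  have hpowlog : ∀ n : ℤ, n ∈ B → (2:ℝ) ^ (Nat.log 2 n.natAbs) ≤ |(n:ℝ)| := by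
    intro n hn
    have hne : n.natAbs ≠ 0 := Int.natAbs_ne_zero.mpr (hBne n hn)
    have := Nat.pow_log_le_self 2 hne
    rw [abs_cast_natAbs]
    calc (2:ℝ) ^ (Nat.log 2 n.natAbs) = ((2 ^ Nat.log 2 n.natAbs : ℕ) : ℝ) := by push_cast; ring
      _ ≤ (n.natAbs : ℝ) := by exact_mod_cast this
  -- Summability of 1/|n| over B
  have hmaster1 := master hB0 hcount (fun k => ((2:ℝ)^k)⁻¹)
    (fun k => by positivity) (C * (2:ℝ)^α * (1 - (2:ℝ)^α * 2⁻¹)⁻¹)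
    (fun K => hS_one hα1 hC K)
    (fun n => |(n:ℝ)|⁻¹) (fun n => by positivity)
    (by
      intro n hn
      have h1 := hpowlog n hn
      have h2 : (0:ℝ) < (2:ℝ) ^ (Nat.log 2 n.natAbs) := by positivity
      exact inv_anti₀ h2 h1)
  have h1 : Summable (fun n : B => |((n : ℤ):ℝ)|⁻¹) := hmaster1.1
  -- Part 1 : summability of ‖z/n‖
  have part1 : ∀ z : ℂ, Summable (fun n : B => ‖z / ((n : ℤ) : ℂ)‖) := by
    intro z
    apply (h1.mul_left ‖z‖).congr
    intro n
    rw [norm_div, Complex.norm_intCast, div_eq_mul_inv]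
  -- Part 2 : multipliability
  have part2 : ∀ z : ℂ, Multipliable (fun n : B => 1 - z / ((n : ℤ) : ℂ)) := by
    intro z
    have hR : (0:ℝ) < ‖z‖ + 1 := by positivity
    obtain ⟨s, hfin, hdiff, hProd⟩ := decomp h1 hR
    exact (hProd z (by linarith [norm_nonneg z])).multipliable
  -- Part 3 : differentiability
  have part3 : Differentiable ℂ (fun z : ℂ => ∏' n : B, (1 - z / ((n : ℤ) : ℂ))) := by
    intro z0
    have hR : (0:ℝ) < ‖z0‖ + 1 := by positivity
    obtain ⟨s, hfin, hdiff, hProd⟩ := decomp h1 hR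
    set R := ‖z0‖ + 1 with hRdef
    have hEq : Set.EqOn (fun z : ℂ => ∏' n : B, (1 - z / ((n : ℤ) : ℂ)))
        (fun z : ℂ => (∏' n : s, (1 - z / (((n : ↥B) : ℤ) : ℂ))) *
          Complex.exp (∑' n : ↥sᶜ, Complex.log (1 - z / (((n : ↥B) : ℤ) : ℂ))))
        (Metric.ball 0 R) := by
      intro z hz
      have hz' : ‖z‖ < R := by rwa [Metric.mem_ball, dist_zero_right] at hz
      exact (hProd z hz').tprod_eq
    have hdiff_rhs : DifferentiableOn ℂ
        (fun z : ℂ => (∏' n : s, (1 - z / (((n : ↥B) : ℤ) : ℂ))) *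
          Complex.exp (∑' n : ↥sᶜ, Complex.log (1 - z / (((n : ↥B) : ℤ) : ℂ))))
        (Metric.ball 0 R) := by
      apply DifferentiableOn.mul
      · -- the finite product part
        haveI : Fintype ↥s := hfin.fintype
        have hfe : (fun z : ℂ => (∏' n : s, (1 - z / (((n : ↥B) : ℤ) : ℂ))))
            = fun z : ℂ => ∏ n : ↥s, (1 - z / (((n : ↥B) : ℤ) : ℂ)) :=
          funext fun z => tprod_fintype _
        rw [hfe]
        exact (differentiable_finset_prod _ _ (fun i _ =>
          (differentiable_const 1).sub (differentiable_id.div_const _))).differentiableOn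
      · exact (Complex.differentiable_exp.comp_differentiableOn hdiff)
    exact ((hdiff_rhs.congr hEq).differentiableAt
      (Metric.isOpen_ball.mem_nhds (by
        rw [Metric.mem_ball, dist_zero_right]; rw [hRdef]; linarith)))
  refine ⟨part1, part2, part3, ?_, ?_⟩
  · -- Part 4 : vanishing on B
    intro n hn
    have hnz : ((n:ℤ):ℂ) ≠ 0 := Int.cast_ne_zero.mpr (hBne n hn)
    have hzero : (fun k : B => 1 - (n : ℂ) / ((k : ℤ) : ℂ)) ⟨n, hn⟩ = 0 := by
      simp only
      rw [div_self hnz, sub_self]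
    exact (hasProd_zero_of_exists_zero _ ⟨n, hn⟩ hzero).tprod_eq
  · -- Part 5 : growth bound
    have h2α : (0:ℝ) < (2:ℝ) ^ α := Real.rpow_pos_of_pos two_pos α
    have hq₁gt : 1 < (2:ℝ) ^ (α/2) :=
      Real.one_lt_rpow_iff_of_pos two_pos |>.mpr (Or.inl ⟨one_lt_two, by positivity⟩)
    have hqlt : (2:ℝ) ^ α * 2⁻¹ < 1 := by
      have := Real.rpow_lt_rpow_of_exponent_lt (x := (2:ℝ)) one_lt_two hα1
      rw [Real.rpow_one] at this
      nlinarith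
    set C' : ℝ := C * (2:ℝ)^α * (4 / ((α/2) * ((2:ℝ)^(α/2) - 1)) + (1 - (2:ℝ)^α * 2⁻¹)⁻¹)
      with hC'def
    have hC'pos : 0 < C' := by
      rw [hC'def]
      have h₁ : (0:ℝ) < 4 / ((α/2) * ((2:ℝ)^(α/2) - 1)) := by
        apply div_pos (by norm_num)
        apply mul_pos (by positivity)
        linarith
      have h₂ : (0:ℝ) < (1 - (2:ℝ)^α * 2⁻¹)⁻¹ := by
        apply inv_pos.mpr
        linarith
      positivity
    refine ⟨C', hC'pos, ?_⟩
    intro z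
    set r : ℝ := 1 + ‖z‖ with hrdef
    have hr1 : (1:ℝ) ≤ r := by rw [hrdef]; linarith [norm_nonneg z]
    have hr0 : (0:ℝ) < r := by linarith
    -- the master bound for the logs
    have hmaster2 := master hB0 hcount
      (fun k => Real.log (1 + r * ((2:ℝ)^k)⁻¹))
      (fun k => Real.log_nonneg (by
        have : (0:ℝ) ≤ r * ((2:ℝ)^k)⁻¹ := by positivity
        linarith))
      (C' * r ^ α)
      (fun K => hS_two hα0 hα1 hC hr1 K)
      (fun n => Real.log (1 + r * |(n:ℝ)|⁻¹))
      (fun n => Real.log_nonneg (by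
        have : (0:ℝ) ≤ r * |(n:ℝ)|⁻¹ := by positivity
        linarith))
      (by
        intro n hn
        have h1' := hpowlog n hn
        have h2' : (0:ℝ) < (2:ℝ) ^ (Nat.log 2 n.natAbs) := by positivity
        have h3' : |(n:ℝ)|⁻¹ ≤ ((2:ℝ) ^ (Nat.log 2 n.natAbs))⁻¹ := inv_anti₀ h2' h1'
        apply Real.log_le_log (by positivity)
        have : r * |(n:ℝ)|⁻¹ ≤ r * ((2:ℝ) ^ (Nat.log 2 n.natAbs))⁻¹ :=
          mul_le_mul_of_nonneg_left h3' hr0.le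
        linarith)
    obtain ⟨hwsum, hwle⟩ := hmaster2
    -- bound finite partial products of norms
    have hfinset : ∀ u : Finset ↥B,
        ∏ n ∈ u, ‖1 - z / (((n : ↥B) : ℤ) : ℂ)‖ ≤ Real.exp (C' * r ^ α) := by
      intro u
      have hfac : ∀ n : ↥B, ‖1 - z / (((n : ↥B) : ℤ) : ℂ)‖
          ≤ Real.exp (Real.log (1 + r * |((n:ℤ):ℝ)|⁻¹)) := by
        intro n
        have hpos : (0:ℝ) < 1 + r * |((n:ℤ):ℝ)|⁻¹ := by positivity
        rw [Real.exp_log hpos]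
        calc ‖1 - z / (((n : ↥B) : ℤ) : ℂ)‖ ≤ ‖(1:ℂ)‖ + ‖z / (((n : ↥B) : ℤ) : ℂ)‖ :=
              norm_sub_le _ _
          _ = 1 + ‖z‖ * |((n:ℤ):ℝ)|⁻¹ := by
              rw [norm_one, norm_div, Complex.norm_intCast, div_eq_mul_inv]
          _ ≤ 1 + r * |((n:ℤ):ℝ)|⁻¹ := by
              have : ‖z‖ * |((n:ℤ):ℝ)|⁻¹ ≤ r * |((n:ℤ):ℝ)|⁻¹ := by
                apply mul_le_mul_of_nonneg_right _ (by positivity)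
                rw [hrdef]; linarith
              linarith
      calc ∏ n ∈ u, ‖1 - z / (((n : ↥B) : ℤ) : ℂ)‖
          ≤ ∏ n ∈ u, Real.exp (Real.log (1 + r * |((n:ℤ):ℝ)|⁻¹)) :=
            Finset.prod_le_prod (fun n _ => norm_nonneg _) (fun n _ => hfac n)
        _ = Real.exp (∑ n ∈ u, Real.log (1 + r * |((n:ℤ):ℝ)|⁻¹)) := by
            rw [Real.exp_sum]
        _ ≤ Real.exp (C' * r ^ α) := by
            apply Real.exp_le_exp.mpr
            calc ∑ n ∈ u, Real.log (1 + r * |((n:ℤ):ℝ)|⁻¹)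
                ≤ ∑' n : B, Real.log (1 + r * |((n:ℤ):ℝ)|⁻¹) :=
                  Summable.sum_le_tsum u (fun n _ => Real.log_nonneg (by
                    have : (0:ℝ) ≤ r * |((n:ℤ):ℝ)|⁻¹ := by positivity
                    linarith)) hwsum
              _ ≤ C' * r ^ α := hwle
    -- conclude via the norm of the infinite product
    have hmul := part2 z
    have hnorm_eq : ‖∏' n : B, (1 - z / ((n : ℤ) : ℂ))‖
        = ∏' n : B, ‖1 - z / ((n : ℤ) : ℂ)‖ := Multipliable.norm_tprod hmul
    have hnorm_mult : Multipliable (fun n : B => ‖1 - z / ((n : ℤ) : ℂ)‖) := hmul.norm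
    have hle : (∏' n : B, ‖1 - z / ((n : ℤ) : ℂ)‖) ≤ Real.exp (C' * r ^ α) :=
      le_of_tendsto hnorm_mult.hasProd (Filter.Eventually.of_forall hfinset)
    rw [hnorm_eq]
    calc (∏' n : B, ‖1 - z / ((n : ℤ) : ℂ)‖) ≤ Real.exp (C' * r ^ α) := hle
      _ = Real.exp (C' * (1 + ‖z‖) ^ α) := by rw [hrdef]
end
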